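/- Let F = Σ_{i∈I_F} a_i x^i ∈ K[x_1,…,x_n] be an irreducible polynomial and u ∈ (K^*)^n. Then the two polynomials F and D_u(F) are not coprime in K[x_1,…,x_n] if and only if (a_i u^i)/(a_j u^j) ∈ k^* whenever i, j ∈ I_F. -/

import Mathlib

open scoped BigOperators Classical

namespace FunctionFieldGCD

variable {K : Type*} [Field K] {Point : Type*}

/-- Truncated order of vanishing `v_𝔭^0(f) = max {0, v_𝔭(f)}`. -/
noncomputable def v0 (v : Point → K → ℤ) (p : Point) (f : K) : ℤ := max 0 (v p f)

/-- The height `h(f) = Σ_𝔭 −min{0, v_𝔭(f)}` of `f`, counting poles with multiplicity. -/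
noncomputable def height (v : Point → K → ℤ) (f : K) : ℤ := ∑ᶠ p : Point, max 0 (-(v p f))

/-- `min {v_𝔭^0(f), v_𝔭^0(g)}` with the convention `v_𝔭^0(0) = +∞`. -/
noncomputable def minv0 (v : Point → K → ℤ) (p : Point) (f g : K) : ℤ :=
  if f = 0 then v0 v p g else if g = 0 then v0 v p f else min (v0 v p f) (v0 v p g)

/-- `N_{S,gcd}(f,g) = Σ_{𝔭∉S} min{v_𝔭^0(f), v_𝔭^0(g)}`. -/
noncomputable def NSgcd (v : Point → K → ℤ) (S : Set Point) (f g : K) : ℤ :=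
  ∑ᶠ p ∈ Sᶜ, minv0 v p f g

/-- `h_gcd(f,g) = Σ_{𝔭} min{v_𝔭^0(f), v_𝔭^0(g)}`. -/
noncomputable def hgcd (v : Point → K → ℤ) (f g : K) : ℤ :=
  ∑ᶠ p : Point, minv0 v p f g

/-- `N_S(f)`: number of zeros of `f` outside `S`, with multiplicity. -/
noncomputable def NS (v : Point → K → ℤ) (S : Set Point) (f : K) : ℤ :=
  ∑ᶠ p ∈ Sᶜ, v0 v p f

/-- `N̄_S(f)`: number of zeros of `f` outside `S`, without multiplicity. -/
noncomputable def NSbar (v : Point → K → ℤ) (S : Set Point) (f : K) : ℤ :=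
  ∑ᶠ p ∈ Sᶜ, min 1 (v0 v p f)

/-- membership in the group `O_S^*` of `S`-units. -/
def IsSUnit (v : Point → K → ℤ) (S : Set Point) (f : K) : Prop :=
  f ≠ 0 ∧ ∀ p ∉ S, v p f = 0

/-- `f` is a constant, i.e. belongs to (the image of) `k`. -/
def IsConst (k : Type*) [Field k] [Algebra k K] (f : K) : Prop :=
  ∃ c : k, algebraMap k K c = f

/-- Projective height of a finite tuple: `h(f_0,…,f_m) = Σ_𝔭 −min_j v_𝔭(f_j)`. -/
noncomputable def heightProj {ι : Type*} [Fintype ι] (v : Point → K → ℤ) (f : ι → K) : ℤ :=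
  ∑ᶠ p : Point,
    -(if h : (Finset.univ : Finset ι).Nonempty then Finset.univ.inf' h fun j => v p (f j) else 0)

/-- `v_𝔭(F) = min_{i ∈ I_F} v_𝔭(a_i)` for a multivariable polynomial `F = Σ a_i x^i`. -/
noncomputable def vPoly {n : ℕ} (v : Point → K → ℤ) (p : Point) (F : MvPolynomial (Fin n) K) :
    ℤ :=
  if h : F.support.Nonempty then F.support.inf' h fun mm => v p (MvPolynomial.coeff mm F) else 0

/-- The height `h(F) = Σ_𝔭 −v_𝔭(F)` of a multivariable polynomial. -/
noncomputable def hPoly {n : ℕ} (v : Point → K → ℤ) (F : MvPolynomial (Fin n) K) : ℤ :=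
  ∑ᶠ p : Point, -(vPoly v p F)

/-- The relevant height `h̃(F) = Σ_𝔭 −min{0, v_𝔭(F)}` of a multivariable polynomial. -/
noncomputable def htilde {n : ℕ} (v : Point → K → ℤ) (F : MvPolynomial (Fin n) K) : ℤ :=
  ∑ᶠ p : Point, max 0 (-(vPoly v p F))

/-- `max_{1≤i≤n} h(g_i)` (heights are nonnegative, so the `toNat` is harmless). -/
noncomputable def maxHeight {n : ℕ} (v : Point → K → ℤ) (g : Fin n → K) : ℤ :=
  ((Finset.univ.sup fun i => (height v (g i)).toNat : ℕ) : ℤ)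

/-- `u^m = u_1^{m_1} ⋯ u_n^{m_n}` for an integer exponent vector `m`. -/
noncomputable def prodZPow {n : ℕ} (u : Fin n → K) (mm : Fin n → ℤ) : K :=
  ∏ j, u j ^ mm j

/-- Coprimality of multivariable polynomials: no common non-unit factor. -/
def CoprimePoly {n : ℕ} (F G : MvPolynomial (Fin n) K) : Prop :=
  ∀ P : MvPolynomial (Fin n) K, P ∣ F → P ∣ G → IsUnit P

/-- `P` is a monomial `a·x^i`. -/
def IsMonomialPoly {n : ℕ} (P : MvPolynomial (Fin n) K) : Prop :=
  ∃ (mm : Fin n →₀ ℕ) (a : K), P = MvPolynomial.monomial mm a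

/-- Axioms expressing that `K`, equipped with the family of normalized order functions
`v_𝔭` indexed by the points `𝔭 ∈ C(k)` of a smooth projective curve `C` of genus `genus`
over the algebraically closed field `k`, is the function field `k(C)`. -/
structure IsFunctionField (k : Type*) [Field k] [Algebra k K]
    (v : Point → K → ℤ) (genus : ℕ) : Prop where
  v_mul : ∀ (p : Point) (f g : K), f ≠ 0 → g ≠ 0 → v p (f * g) = v p f + v p g
  v_add : ∀ (p : Point) (f g : K), f ≠ 0 → g ≠ 0 → f + g ≠ 0 → min (v p f) (v p g) ≤ v p (f + g)
  v_one : ∀ p : Point, v p (1 : K) = 0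
  v_algebraMap : ∀ (p : Point) (c : k), c ≠ 0 → v p (algebraMap k K c) = 0
  exists_uniformizer : ∀ p : Point, ∃ f : K, f ≠ 0 ∧ v p f = 1
  finite_support : ∀ f : K, f ≠ 0 → {p : Point | v p f ≠ 0}.Finite
  sum_v : ∀ f : K, f ≠ 0 → ∑ᶠ p : Point, v p f = 0
  const_of_nonneg : ∀ f : K, f ≠ 0 → (∀ p : Point, 0 ≤ v p f) → ∃ c : k, algebraMap k K c = f
  riemann_roch : ∀ D : Point →₀ ℤ, 2 * (genus : ℤ) - 2 < D.sum (fun _ d => d) →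
    (Module.finrank k
        (Submodule.span k {f : K | f = 0 ∨ ∀ p : Point, -(D p) ≤ v p f}) : ℤ)
      = D.sum (fun _ d => d) + 1 - genus

/-- Axioms for the global derivation `η ↦ η' = dη/dt` on `K` determined by an element
`t` as in Proposition 12 (`dt p` plays the role of `v_𝔭(d_𝔭 t)`). -/
structure IsGoodDerivation (k : Type*) [Field k] [Algebra k K]
    (v : Point → K → ℤ) (genus : ℕ) (D : K → K) (dt : Point → ℤ) : Prop where
  map_add : ∀ f g : K, D (f + g) = D f + D g
  leibniz : ∀ f g : K, D (f * g) = f * D g + g * D f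
  map_const : ∀ c : k, D (algebraMap k K c) = 0
  ker_const : ∀ f : K, D f = 0 → ∃ c : k, algebraMap k K c = f
  v_D_of_vne : ∀ f : K, f ≠ 0 → ∀ p : Point, v p f ≠ 0 →
    D f ≠ 0 ∧ v p (D f) = v p f - 1 - dt p
  v_D_of_veq : ∀ f : K, f ≠ 0 → ∀ p : Point, v p f = 0 → D f ≠ 0 → -(dt p) ≤ v p (D f)
  sum_dt : ∑ᶠ p : Point, max 0 (dt p) ≤ 3 * (genus : ℤ)

/-- `D_u(F) = Σ_{i∈I_F} ((a_i u^i)' / u^i)·x^i`. -/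
noncomputable def Du {n : ℕ} (D : K → K) (u : Fin n → K) (F : MvPolynomial (Fin n) K) :
    MvPolynomial (Fin n) K :=
  ∑ mm ∈ F.support,
    MvPolynomial.monomial mm
      ((D (MvPolynomial.coeff mm F * ∏ j, u j ^ mm j)) / ∏ j, u j ^ mm j)



section Aux

private lemma digits_injective {B : ℕ} : ∀ {n : ℕ} (a b : Fin n → ℕ),
    (∀ i, a i < B) → (∀ i, b i < B) →
    (∑ i, a i * B ^ (i : ℕ)) = (∑ i, b i * B ^ (i : ℕ)) → a = b := by
  intro n
  induction n with
  | zero => intro a b _ _ _; funext i; exact i.elim0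
  | succ m ih =>
    intro a b ha hb hsum
    rw [Fin.sum_univ_succ, Fin.sum_univ_succ] at hsum
    have key : ∀ c : Fin (m + 1) → ℕ,
        ∑ i : Fin m, c i.succ * B ^ ((i.succ : Fin (m+1)) : ℕ)
          = B * ∑ i : Fin m, c i.succ * B ^ (i : ℕ) := by
      intro c
      rw [Finset.mul_sum]
      refine Finset.sum_congr rfl fun i _ => ?_
      rw [Fin.val_succ, pow_succ]
      ring
    rw [key a, key b] at hsum
    simp only [Fin.val_zero, pow_zero, mul_one] at hsum
    have hB : 0 < B := lt_of_le_of_lt (Nat.zero_le _) (ha 0)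
    have h0 : a 0 = b 0 := by
      have h := congrArg (· % B) hsum
      simpa [Nat.add_mul_mod_self_left, Nat.mod_eq_of_lt (ha 0),
        Nat.mod_eq_of_lt (hb 0)] using h
    have hs : (∑ i : Fin m, a i.succ * B ^ (i : ℕ))
        = ∑ i : Fin m, b i.succ * B ^ (i : ℕ) := by
      rw [h0] at hsum
      have h2 : B * (∑ i : Fin m, a i.succ * B ^ (i : ℕ))
          = B * ∑ i : Fin m, b i.succ * B ^ (i : ℕ) := by omega
      exact Nat.eq_of_mul_eq_mul_left hB h2
    have htail := ih (fun i => a i.succ) (fun i => b i.succ)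
      (fun i => ha _) (fun i => hb _) hs
    funext i
    refine Fin.cases h0 (fun j => ?_) i
    exact congrFun htail j

private lemma eq_C_mul_of_dvd_of_support_subset {K : Type*} [Field K] {n : ℕ}
    {F H : MvPolynomial (Fin n) K} (hF : F ≠ 0) (hdvd : F ∣ H)
    (hsupp : H.support ⊆ F.support) : ∃ c : K, H = MvPolynomial.C c * F := by
  obtain ⟨G, rfl⟩ := hdvd
  by_cases hG : G = 0
  · exact ⟨0, by simp [hG]⟩
  set B : ℕ := F.totalDegree + G.totalDegree + 1 with hB
  set wt : (Fin n →₀ ℕ) → ℕ := fun m => ∑ i, m i * B ^ (i : ℕ) with hwt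
  have hwadd : ∀ a b, wt (a + b) = wt a + wt b := by
    intro a b
    simp only [hwt, Finsupp.add_apply, add_mul]
    rw [Finset.sum_add_distrib]
  have hcoord : ∀ (p : MvPolynomial (Fin n) K), p.totalDegree < B →
      ∀ m ∈ p.support, ∀ i, m i < B := by
    intro p hp m hm i
    have h1 : m i ≤ p.degreeOf i := by
      rw [MvPolynomial.degreeOf_eq_sup]
      exact Finset.le_sup (f := fun m => m i) hm
    exact lt_of_le_of_lt (h1.trans (MvPolynomial.degreeOf_le_totalDegree p i)) hp
  have hcF : ∀ m ∈ F.support, ∀ i, m i < B :=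
    hcoord F (by omega) 
  have hcG : ∀ m ∈ G.support, ∀ i, m i < B :=
    hcoord G (by omega)
  obtain ⟨MF, hMF, hMFmax⟩ :=
    Finset.exists_max_image F.support wt (MvPolynomial.support_nonempty.mpr hF)
  obtain ⟨MG, hMG, hMGmax⟩ :=
    Finset.exists_max_image G.support wt (MvPolynomial.support_nonempty.mpr hG)
  have hprod : MvPolynomial.coeff (MF + MG) (F * G)
      = MvPolynomial.coeff MF F * MvPolynomial.coeff MG G := by
    rw [MvPolynomial.coeff_mul]
    refine Finset.sum_eq_single_of_mem (MF, MG)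
      (Finset.HasAntidiagonal.mem_antidiagonal.mpr rfl) fun q hq hne => ?_
    by_contra h0
    obtain ⟨h1, h2⟩ := mul_ne_zero_iff.mp h0
    have hq1 : q.1 ∈ F.support := MvPolynomial.mem_support_iff.mpr h1
    have hq2 : q.2 ∈ G.support := MvPolynomial.mem_support_iff.mpr h2
    have hqsum : q.1 + q.2 = MF + MG := Finset.HasAntidiagonal.mem_antidiagonal.mp hq
    have hwsum : wt q.1 + wt q.2 = wt MF + wt MG := by
      rw [← hwadd, ← hwadd, hqsum]
    have hle1 := hMFmax q.1 hq1
    have hle2 := hMGmax q.2 hq2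
    have heq1 : wt q.1 = wt MF := by omega
    have hfun : (⇑q.1 : Fin n → ℕ) = ⇑MF :=
      digits_injective _ _ (hcF q.1 hq1) (hcF MF hMF) heq1
    have hq1eq : q.1 = MF := DFunLike.coe_injective hfun
    have hq2eq : q.2 = MG := by
      rw [hq1eq] at hqsum
      exact add_left_cancel hqsum
    exact hne (Prod.ext hq1eq hq2eq)
  have hmem : MF + MG ∈ (F * G).support := by
    rw [MvPolynomial.mem_support_iff, hprod]
    exact mul_ne_zero (MvPolynomial.mem_support_iff.mp hMF)
      (MvPolynomial.mem_support_iff.mp hMG)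
  have hwle : wt (MF + MG) ≤ wt MF := hMFmax _ (hsupp hmem)
  have hwMG : wt MG = 0 := by
    rw [hwadd] at hwle; omega
  have hMGzero : ∀ m ∈ G.support, m = 0 := by
    intro m hm
    have hle := hMGmax m hm
    have hm0 : wt m = 0 := by omega
    have : ∀ i : Fin n, m i * B ^ (i : ℕ) = 0 := by
      intro i
      have := (Finset.sum_eq_zero_iff.mp hm0) i (Finset.mem_univ i)
      exact this
    refine DFunLike.coe_injective (funext fun i => ?_)
    have hBpow : B ^ (i : ℕ) ≠ 0 := by positivity
    have := this i
    simpa [hBpow] using this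
  refine ⟨MvPolynomial.coeff 0 G, ?_⟩
  have hGC : G = MvPolynomial.C (MvPolynomial.coeff 0 G) := by
    ext m
    rw [MvPolynomial.coeff_C]
    by_cases hm : m = 0
    · subst hm; simp
    · rw [if_neg fun h => hm h.symm]
      by_contra hc
      exact hm (hMGzero m (MvPolynomial.mem_support_iff.mpr hc))
  rw [← hGC, mul_comm]

private lemma coeff_Du {K : Type*} [Field K] (D : K → K) {n : ℕ} (u : Fin n → K)
    (F : MvPolynomial (Fin n) K) (mm : Fin n →₀ ℕ) :
    MvPolynomial.coeff mm (Du D u F) =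
      if mm ∈ F.support then
        D (MvPolynomial.coeff mm F * ∏ j, u j ^ mm j) / ∏ j, u j ^ mm j
      else 0 := by
  unfold Du
  rw [MvPolynomial.coeff_sum]
  simp only [MvPolynomial.coeff_monomial]
  exact Finset.sum_ite_eq' F.support mm _

end Aux

/-- **Lemma 3.3.** For irreducible `F = Σ_{i∈I_F} a_i x^i` and `u ∈ (K^*)^n`, the polynomials
`F` and `D_u(F)` are *not* coprime iff `(a_i u^i)/(a_j u^j) ∈ k^*` for all `i, j ∈ I_F`. -/
theorem not_coprime_Du_iff
    (k K Point : Type*) [Field k] [Field K] [Algebra k K] [IsAlgClosed k] [CharZero k]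
    (v : Point → K → ℤ) (genus : ℕ) (hK : IsFunctionField k v genus)
    (D : K → K) (dt : Point → ℤ) (hD : IsGoodDerivation k v genus D dt)
    (n : ℕ) (F : MvPolynomial (Fin n) K) (hF : Irreducible F)
    (u : Fin n → K) (hu : ∀ i, u i ≠ 0) :
    (¬ CoprimePoly F (Du D u F)) ↔
      ∀ mi ∈ F.support, ∀ mj ∈ F.support,
        IsConst k ((MvPolynomial.coeff mi F * ∏ j, u j ^ mi j) /
          (MvPolynomial.coeff mj F * ∏ j, u j ^ mj j)) := by
  classical
  have hF0 : F ≠ 0 := hF.ne_zero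
  have hPne : ∀ mm : Fin n →₀ ℕ, (∏ j, u j ^ mm j) ≠ 0 := fun mm =>
    Finset.prod_ne_zero_iff.mpr fun j _ => pow_ne_zero _ (hu j)
  have hwne : ∀ mm ∈ F.support, MvPolynomial.coeff mm F * ∏ j, u j ^ mm j ≠ 0 :=
    fun mm hmm => mul_ne_zero (MvPolynomial.mem_support_iff.mp hmm) (hPne mm)
  have hDsmul : ∀ (c : k) (x : K),
      D (algebraMap k K c * x) = algebraMap k K c * D x := by
    intro c x
    rw [hD.leibniz, hD.map_const, mul_zero, add_zero]
  constructor
  · intro hnc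
    simp only [CoprimePoly, not_forall] at hnc
    obtain ⟨Q, hQF, hQDu, hQu⟩ := hnc
    have hFDu : F ∣ Du D u F := by
      obtain ⟨R, hR⟩ := hQF
      rcases hF.isUnit_or_isUnit hR with hun | hun
      · exact absurd hun hQu
      · obtain ⟨Ru, hRu⟩ := hun
        rw [← hRu] at hR
        exact dvd_trans ⟨(Ru⁻¹ : (MvPolynomial (Fin n) K)ˣ),
          by rw [hR, Units.mul_inv_cancel_right]⟩ hQDu
    have hsupp : (Du D u F).support ⊆ F.support := by
      intro mm hmm
      by_contra hn
      exact MvPolynomial.mem_support_iff.mp hmm (by rw [coeff_Du, if_neg hn])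
    obtain ⟨c, hc⟩ := eq_C_mul_of_dvd_of_support_subset hF0 hFDu hsupp
    have hDw : ∀ mm ∈ F.support,
        D (MvPolynomial.coeff mm F * ∏ j, u j ^ mm j)
          = c * (MvPolynomial.coeff mm F * ∏ j, u j ^ mm j) := by
      intro mm hmm
      have h1 := congrArg (MvPolynomial.coeff mm) hc
      rw [coeff_Du, if_pos hmm, MvPolynomial.coeff_C_mul,
        div_eq_iff (hPne mm)] at h1
      rw [h1]; ring
    have key : ∀ wi wj : K, wj ≠ 0 → D wi = c * wi → D wj = c * wj →
        ∃ cc : k, algebraMap k K cc = wi / wj := by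
      intro wi wj hwjne hDi hDj
      have hr : wi = wi / wj * wj := (div_mul_cancel₀ wi hwjne).symm
      have h1 : D (wi / wj * wj) = wi / wj * D wj + wj * D (wi / wj) :=
        hD.leibniz _ _
      rw [← hr, hDi, hDj] at h1
      have h2 : wj * D (wi / wj) = 0 := by linear_combination c * hr - h1
      exact hD.ker_const _ ((mul_eq_zero.mp h2).resolve_left hwjne)
    intro mi hmi mj hmj
    exact key _ _ (hwne mj hmj) (hDw mi hmi) (hDw mj hmj)
  · intro h hcop
    obtain ⟨j0, hj0⟩ := MvPolynomial.support_nonempty.mpr hF0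
    set w0 := MvPolynomial.coeff j0 F * ∏ j, u j ^ j0 j with hw0
    have hw0ne : w0 ≠ 0 := hwne j0 hj0
    have hDueq : Du D u F = MvPolynomial.C (D w0 / w0) * F := by
      ext mm
      rw [coeff_Du, MvPolynomial.coeff_C_mul]
      by_cases hmm : mm ∈ F.support
      · rw [if_pos hmm]
        obtain ⟨cc, hcc⟩ := h mm hmm j0 hj0
        have hPmne := hPne mm
        have hane : MvPolynomial.coeff mm F ≠ 0 := MvPolynomial.mem_support_iff.mp hmm
        have hcw : MvPolynomial.coeff mm F * ∏ j, u j ^ mm j = algebraMap k K cc * w0 := by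
          rw [hcc, hw0]; field_simp
          rw [div_self (hwne j0 hj0)]
        rw [hcw, hDsmul, hcc]
        field_simp
        rw [← hw0, mul_div_assoc, div_self hw0ne, mul_one]
      · rw [if_neg hmm, MvPolynomial.notMem_support_iff.mp hmm, mul_zero]
    exact hF.not_isUnit
      (hcop F dvd_rfl ⟨MvPolynomial.C (D w0 / w0), by rw [hDueq, mul_comm]⟩)

end FunctionFieldGCD
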